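/- There exists a constant C > 0 such that for all x, y ∈ ℝ, |a'(x) − a'(y)| ≤ C |a(x) − a(y)|. -/

import Mathlib

open MeasureTheory

/-- There exists a constant `C > 0` such that for all `x, y ∈ ℝ`,
`|a'(x) − a'(y)| ≤ C |a(x) − a(y)|`, where `a(x) = ∫_{-∞}^x (1+ψ(y))^{-(1+ε)} dy`. -/
theorem stmt1 (ε : ℝ) (hε : 0 < ε) (ψ : ℝ → ℝ)
    (hψ : ContDiff ℝ 3 ψ) (hψ0 : ∀ y, 0 ≤ ψ y)
    (hψabs : ∀ y, 1 ≤ |y| → ψ y = |y|)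
    (a : ℝ → ℝ)
    (ha : ∀ x, a x = ∫ y in Set.Iic x, (1 + ψ y) ^ (-(1 + ε))) :
    ∃ C > 0, ∀ x y : ℝ, |deriv a x - deriv a y| ≤ C * |a x - a y| := by
  set p : ℝ := 1 + ε with hpdef
  have hp : 0 < p := by positivity
  set f : ℝ → ℝ := fun y => (1 + ψ y) ^ (-p) with hfdef
  have h1 : ∀ y, (0:ℝ) < 1 + ψ y := fun y => by have := hψ0 y; linarith
  have h1' : ∀ y, (1:ℝ) ≤ 1 + ψ y := fun y => by have := hψ0 y; linarith
  have hψc : Continuous ψ := hψ.continuous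
  have hfc : Continuous f :=
    Continuous.rpow_const (continuous_const.add hψc) fun x => Or.inl (h1 x).ne'
  have hfpos : ∀ y, 0 < f y := fun y => Real.rpow_pos_of_pos (h1 y) _
  -- integrability of f
  have hint : Integrable f := by
    have hbase : Integrable (fun y : ℝ => (2:ℝ) ^ p * (1 + ‖y‖) ^ (-p)) :=
      (integrable_one_add_norm (E := ℝ) (by simp; linarith)).const_mul _
    refine hbase.mono' hfc.aestronglyMeasurable (Filter.Eventually.of_forall fun y => ?_)
    have hle : (1 + |y|) / 2 ≤ 1 + ψ y := by
      rcases le_or_gt (|y|) 1 with h | h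
      · linarith [hψ0 y]
      · rw [hψabs y h.le]; linarith [abs_nonneg y]
    have h2 : f y ≤ ((1 + |y|) / 2) ^ (-p) :=
      Real.rpow_le_rpow_of_nonpos (by positivity) hle (by linarith)
    have h3 : ((1 + |y|) / 2) ^ (-p) = (2:ℝ) ^ p * (1 + |y|) ^ (-p) := by
      rw [Real.div_rpow (by positivity) (by norm_num), Real.rpow_neg (by norm_num : (0:ℝ) ≤ 2)]
      field_simp
    rw [Real.norm_eq_abs, abs_of_pos (hfpos y)]
    simpa [Real.norm_eq_abs, h3] using h2
  have hIic : ∀ x : ℝ, IntegrableOn f (Set.Iic x) := fun x => hint.integrableOn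
  -- a x - a y is the interval integral of f
  have hsub : ∀ x y : ℝ, a x - a y = ∫ t in y..x, f t := by
    intro x y
    rw [ha, ha]
    exact intervalIntegral.integral_Iic_sub_Iic (hIic y) (hIic x)
  -- derivative of a
  have hderiv : ∀ x, HasDerivAt a (f x) x := by
    intro x
    have h0 : HasDerivAt (fun u => ∫ t in (0:ℝ)..u, f t) (f x) x :=
      intervalIntegral.integral_hasDerivAt_right hint.intervalIntegrable
        (hfc.stronglyMeasurable.stronglyMeasurableAtFilter) hfc.continuousAt
    have ha' : a = fun u => (∫ t in (0:ℝ)..u, f t) + a 0 := by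
      funext u
      have := hsub u 0
      linarith
    rw [ha']
    exact h0.add_const _
  -- derivative of f
  have hψd : ∀ y, HasDerivAt ψ (deriv ψ y) y := fun y =>
    ((hψ.differentiable (by norm_num)) y).hasDerivAt
  set g : ℝ → ℝ := fun y => -p * (1 + ψ y) ^ (-p - 1) * deriv ψ y with hgdef
  have hf' : ∀ y, HasDerivAt f (g y) y := by
    intro y
    have h2 : HasDerivAt (fun u : ℝ => 1 + ψ u) (deriv ψ y) y := (hψd y).const_add 1
    have h3 := (Real.hasDerivAt_rpow_const (p := -p) (Or.inl (h1 y).ne')).comp y h2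
    simpa [hfdef, hgdef, mul_assoc, Function.comp_def] using h3
  have hψ'c : Continuous (deriv ψ) := hψ.continuous_deriv (by norm_num)
  have hgc : Continuous g :=
    (continuous_const.mul ((continuous_const.add hψc).rpow_const fun x =>
      Or.inl (h1 x).ne')).mul hψ'c
  -- bound on deriv ψ
  obtain ⟨M1, hM1⟩ : ∃ M1, ∀ y ∈ Set.Icc (-2:ℝ) 2, |deriv ψ y| ≤ M1 := by
    obtain ⟨C, hC⟩ := (isCompact_Icc (a := (-2:ℝ)) (b := 2)).exists_bound_of_continuousOn
      hψ'c.continuousOn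
    exact ⟨C, fun y hy => by simpa using hC y hy⟩
  set M : ℝ := max M1 1 with hMdef
  have hM1le : (1:ℝ) ≤ M := le_max_right _ _
  have hM : ∀ y, |deriv ψ y| ≤ M := by
    intro y
    rcases le_or_gt (|y|) 2 with h | h
    · exact le_trans (hM1 y (abs_le.mp h)) (le_max_left _ _)
    · rcases lt_abs.mp h with hy | hy
      · have hev : ψ =ᶠ[nhds y] fun z => z := by
          filter_upwards [Ioi_mem_nhds (show (1:ℝ) < y by linarith)] with z hz
          have hz' : (1:ℝ) < z := Set.mem_Ioi.mp hz
          have hz1 : (1:ℝ) ≤ |z| := by rw [abs_of_pos (by linarith : (0:ℝ) < z)]; linarith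
          rw [hψabs z hz1, abs_of_pos (by linarith : (0:ℝ) < z)]
        have : deriv ψ y = 1 := by rw [hev.deriv_eq]; simp
        rw [this]; simpa using hM1le
      · have hy' : y < -1 := by linarith
        have hev : ψ =ᶠ[nhds y] fun z => -z := by
          filter_upwards [Iio_mem_nhds (show y < (-1:ℝ) by linarith)] with z hz
          have hz' : z < (-1:ℝ) := Set.mem_Iio.mp hz
          have hz1 : (1:ℝ) ≤ |z| := by rw [abs_of_neg (by linarith : z < 0)]; linarith
          rw [hψabs z hz1, abs_of_neg (by linarith : z < 0)]
        have : deriv ψ y = -1 := by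
          rw [hev.deriv_eq]
          simp [deriv_neg]
        rw [this]; simpa using hM1le
  have hMpos : 0 < M := lt_of_lt_of_le one_pos hM1le
  -- pointwise bound |g| ≤ p*M*f
  have hbound : ∀ y, |g y| ≤ p * M * f y := by
    intro y
    rw [hgdef]
    have e2 : (0:ℝ) < (1 + ψ y) ^ (-p - 1) := Real.rpow_pos_of_pos (h1 y) _
    calc |-p * (1 + ψ y) ^ (-p - 1) * deriv ψ y|
        = p * (1 + ψ y) ^ (-p - 1) * |deriv ψ y| := by
          rw [abs_mul, abs_mul, abs_neg, abs_of_pos hp, abs_of_pos e2]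
      _ ≤ p * (1 + ψ y) ^ (-p) * M := by
          have h4 : (1 + ψ y) ^ (-p - 1) ≤ (1 + ψ y) ^ (-p) :=
            Real.rpow_le_rpow_of_exponent_le (h1' y) (by linarith)
          exact mul_le_mul (mul_le_mul_of_nonneg_left h4 hp.le) (hM y) (abs_nonneg _)
            (mul_nonneg hp.le (Real.rpow_pos_of_pos (h1 y) _).le)
      _ = p * M * f y := by rw [hfdef]; ring
  -- key inequality for ordered pairs
  have key : ∀ x y : ℝ, y ≤ x → |f x - f y| ≤ p * M * (a x - a y) := by
    intro x y hyx
    have hgint : IntervalIntegrable g volume y x := hgc.intervalIntegrable _ _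
    have hftc : ∫ t in y..x, g t = f x - f y :=
      intervalIntegral.integral_eq_sub_of_hasDerivAt (fun t _ => hf' t) hgint
    rw [← hftc]
    calc |∫ t in y..x, g t| ≤ ∫ t in y..x, |g t| :=
          intervalIntegral.abs_integral_le_integral_abs hyx
      _ ≤ ∫ t in y..x, p * M * f t := by
          apply intervalIntegral.integral_mono_on hyx (hgint.abs)
            ((hfc.intervalIntegrable _ _).const_mul _)
          intro t _
          exact hbound t
      _ = p * M * ∫ t in y..x, f t := intervalIntegral.integral_const_mul _ _
      _ = p * M * (a x - a y) := by rw [hsub]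
  refine ⟨p * M, by positivity, fun x y => ?_⟩
  rw [(hderiv x).deriv, (hderiv y).deriv]
  rcases le_total y x with h | h
  · have hnn : 0 ≤ a x - a y := by
      rw [hsub]
      exact intervalIntegral.integral_nonneg h fun t _ => (hfpos t).le
    rw [abs_of_nonneg hnn]
    exact key x y h
  · have hnn : 0 ≤ a y - a x := by
      rw [hsub]
      exact intervalIntegral.integral_nonneg h fun t _ => (hfpos t).le
    rw [abs_sub_comm (a x), abs_of_nonneg hnn, abs_sub_comm (f x)]
    exact key y x h
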